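/- For δ₁, δ₂ ∈ [0,1], the composition of the (0,δ)-DP tradeoff curves satisfies f_{0,δ₁} ⊗ f_{0,δ₂} = f_{0, δ₁+δ₂−δ₁δ₂}, and δ₁ > δ₂ implies f_{0,δ₁}(α) ≤ f_{0,δ₂}(α) for all α ∈ [0,1]. Hence the family {f_{0,δ} : δ ∈ [0,1]} is closed under composition and totally ordered pointwise. -/

import Mathlib

open MeasureTheory Set
open scoped ENNReal NNReal

/-- Tradeoff function `T_α(P‖Q)`: the infimum of Type II errors `1 - ∫ φ dQ` over
measurable randomized tests `φ : Ω → [0,1]` with Type I error `∫ φ dP ≤ α`. -/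
noncomputable def tradeoff {Ω : Type*} [MeasurableSpace Ω] (P Q : Measure Ω) (α : ℝ) : ℝ :=
  sInf {β : ℝ | ∃ φ : Ω → ℝ, Measurable φ ∧ (∀ ω, φ ω ∈ Set.Icc (0 : ℝ) 1) ∧
    (∫ ω, φ ω ∂P) ≤ α ∧ β = 1 - ∫ ω, φ ω ∂Q}

/-- The `(0,δ)`-DP tradeoff curve `f_{0,δ}(α) = max (0, 1 - δ - α)`. -/
noncomputable def f0d (δ : ℝ) (α : ℝ) : ℝ :=
  max 0 (1 - δ - α)

section aux
variable {Ω : Type*} [MeasurableSpace Ω]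

lemma aux_test_integrable (μ : Measure Ω) [IsFiniteMeasure μ] {φ : Ω → ℝ}
    (hm : Measurable φ) (hb : ∀ ω, φ ω ∈ Set.Icc (0:ℝ) 1) : Integrable φ μ :=
  (integrable_const (1:ℝ)).mono' hm.aestronglyMeasurable
    (Filter.Eventually.of_forall fun ω => by
      rw [Real.norm_eq_abs, abs_of_nonneg (hb ω).1]; exact (hb ω).2)

lemma aux_test_int_le_one (μ : Measure Ω) [IsProbabilityMeasure μ] {φ : Ω → ℝ}
    (hm : Measurable φ) (hb : ∀ ω, φ ω ∈ Set.Icc (0:ℝ) 1) : (∫ ω, φ ω ∂μ) ≤ 1 := by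
  have h := integral_mono (μ := μ) (aux_test_integrable μ hm hb)
    (integrable_const (1:ℝ)) (fun ω => (hb ω).2)
  simpa using h

lemma aux_int_one_sub (μ : Measure Ω) [IsProbabilityMeasure μ] {φ : Ω → ℝ}
    (hm : Measurable φ) (hb : ∀ ω, φ ω ∈ Set.Icc (0:ℝ) 1) :
    ∫ ω, (1 - φ ω) ∂μ = 1 - ∫ ω, φ ω ∂μ := by
  rw [integral_sub (integrable_const 1) (aux_test_integrable μ hm hb)]
  simp

lemma aux_set_lb (P Q : Measure Ω) [IsProbabilityMeasure Q] (α : ℝ) :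
    ∀ β ∈ {β : ℝ | ∃ φ : Ω → ℝ, Measurable φ ∧ (∀ ω, φ ω ∈ Set.Icc (0 : ℝ) 1) ∧
      (∫ ω, φ ω ∂P) ≤ α ∧ β = 1 - ∫ ω, φ ω ∂Q}, 0 ≤ β := by
  rintro β ⟨φ, hm, hb, _, rfl⟩
  have := aux_test_int_le_one Q hm hb
  linarith

lemma aux_set_nonempty (P Q : Measure Ω) {α : ℝ} (hα : 0 ≤ α) :
    (1:ℝ) ∈ {β : ℝ | ∃ φ : Ω → ℝ, Measurable φ ∧ (∀ ω, φ ω ∈ Set.Icc (0 : ℝ) 1) ∧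
      (∫ ω, φ ω ∂P) ≤ α ∧ β = 1 - ∫ ω, φ ω ∂Q} :=
  ⟨fun _ => 0, measurable_const, fun ω => by simp, by simpa using hα, by simp⟩

lemma aux_exists_test (P Q : Measure Ω) [IsProbabilityMeasure P] [IsProbabilityMeasure Q]
    {δ : ℝ} (h : ∀ α ∈ Set.Icc (0:ℝ) 1, tradeoff P Q α = f0d δ α)
    {α : ℝ} (hα : α ∈ Set.Icc (0:ℝ) 1) {ε : ℝ} (hε : 0 < ε) :
    ∃ φ : Ω → ℝ, Measurable φ ∧ (∀ ω, φ ω ∈ Set.Icc (0:ℝ) 1) ∧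
      (∫ ω, φ ω ∂P) ≤ α ∧ 1 - ∫ ω, φ ω ∂Q < f0d δ α + ε := by
  have hne : {β : ℝ | ∃ φ : Ω → ℝ, Measurable φ ∧ (∀ ω, φ ω ∈ Set.Icc (0 : ℝ) 1) ∧
      (∫ ω, φ ω ∂P) ≤ α ∧ β = 1 - ∫ ω, φ ω ∂Q}.Nonempty :=
    ⟨1, aux_set_nonempty P Q hα.1⟩
  have hlt : tradeoff P Q α < f0d δ α + ε := by rw [h α hα]; linarith
  obtain ⟨β, hβmem, hβlt⟩ := exists_lt_of_csInf_lt hne hlt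
  obtain ⟨φ, hm, hb, hP, rfl⟩ := hβmem
  exact ⟨φ, hm, hb, hP, hβlt⟩

end aux

set_option maxHeartbeats 1000000 in
lemma aux_upper {Ω Ω' : Type*} [MeasurableSpace Ω] [MeasurableSpace Ω']
    (δ₁ δ₂ : ℝ) (h10 : 0 ≤ δ₁) (h11 : δ₁ ≤ 1) (h20 : 0 ≤ δ₂) (h21 : δ₂ ≤ 1)
    (P Q : Measure Ω) (P' Q' : Measure Ω')
    [IsProbabilityMeasure P] [IsProbabilityMeasure Q]
    [IsProbabilityMeasure P'] [IsProbabilityMeasure Q']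
    (hPQ : ∀ α ∈ Set.Icc (0 : ℝ) 1, tradeoff P Q α = f0d δ₁ α)
    (hPQ' : ∀ α ∈ Set.Icc (0 : ℝ) 1, tradeoff P' Q' α = f0d δ₂ α)
    {α : ℝ} (hα0 : 0 ≤ α) (hα1 : α ≤ 1) {ε : ℝ} (hε : 0 < ε) :
    tradeoff (P.prod P') (Q.prod Q') α ≤ f0d (δ₁ + δ₂ - δ₁ * δ₂) α + ε := by
  set δ : ℝ := δ₁ + δ₂ - δ₁ * δ₂ with hδdef
  have hδmul : (1 - δ₁) * (1 - δ₂) = 1 - δ := by rw [hδdef]; ring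
  have hδ0 : 0 ≤ δ := by
    have h := mul_le_one₀ (by linarith : 1 - δ₁ ≤ 1) (by linarith : (0:ℝ) ≤ 1 - δ₂)
      (by linarith : 1 - δ₂ ≤ 1)
    linarith [hδmul]
  have hδle : δ ≤ 1 := by
    have h := mul_nonneg (by linarith : (0:ℝ) ≤ 1 - δ₁) (by linarith : (0:ℝ) ≤ 1 - δ₂)
    linarith [hδmul]
  set e : ℝ := min (ε/3) (1/2) with hedef
  have he : 0 < e := lt_min (by linarith) (by norm_num)
  have he2 : e ≤ 1/2 := min_le_right _ _
  have he3 : 3*e ≤ ε := by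
    have := min_le_left (ε/3) (1/2); linarith
  -- near-optimal tests at levels 0 and 1-δᵢ
  obtain ⟨ψ₁, hψ₁m, hψ₁b, hψ₁P, hψ₁Q⟩ :=
    aux_exists_test P Q hPQ (α := 0) ⟨le_rfl, by norm_num⟩ he
  obtain ⟨χ₁, hχ₁m, hχ₁b, hχ₁P, hχ₁Q⟩ :=
    aux_exists_test P Q hPQ (α := 1 - δ₁) ⟨by linarith, by linarith⟩ he
  obtain ⟨ψ₂, hψ₂m, hψ₂b, hψ₂P, hψ₂Q⟩ :=
    aux_exists_test P' Q' hPQ' (α := 0) ⟨le_rfl, by norm_num⟩ he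
  obtain ⟨χ₂, hχ₂m, hχ₂b, hχ₂P, hχ₂Q⟩ :=
    aux_exists_test P' Q' hPQ' (α := 1 - δ₂) ⟨by linarith, by linarith⟩ he
  -- unpack the f0d values
  have hf₁0 : f0d δ₁ 0 = 1 - δ₁ := by
    unfold f0d; rw [sub_zero, max_eq_right (by linarith)]
  have hf₁ : f0d δ₁ (1 - δ₁) = 0 := by unfold f0d; simp
  have hf₂0 : f0d δ₂ 0 = 1 - δ₂ := by
    unfold f0d; rw [sub_zero, max_eq_right (by linarith)]
  have hf₂ : f0d δ₂ (1 - δ₂) = 0 := by unfold f0d; simp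
  rw [hf₁0] at hψ₁Q; rw [hf₁] at hχ₁Q; rw [hf₂0] at hψ₂Q; rw [hf₂] at hχ₂Q
  -- integral abbreviations and basic facts
  have ha₁ : ∫ ω, ψ₁ ω ∂P = 0 :=
    le_antisymm hψ₁P (integral_nonneg fun ω => (hψ₁b ω).1)
  have ha₂ : ∫ ω, ψ₂ ω ∂P' = 0 :=
    le_antisymm hψ₂P (integral_nonneg fun ω => (hψ₂b ω).1)
  have hb₁l : δ₁ - e < ∫ ω, ψ₁ ω ∂Q := by linarith
  have hb₁u : ∫ ω, ψ₁ ω ∂Q ≤ 1 := aux_test_int_le_one Q hψ₁m hψ₁b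
  have hb₁0 : 0 ≤ ∫ ω, ψ₁ ω ∂Q := integral_nonneg fun ω => (hψ₁b ω).1
  have hb₂l : δ₂ - e < ∫ ω, ψ₂ ω ∂Q' := by linarith
  have hb₂u : ∫ ω, ψ₂ ω ∂Q' ≤ 1 := aux_test_int_le_one Q' hψ₂m hψ₂b
  have hb₂0 : 0 ≤ ∫ ω, ψ₂ ω ∂Q' := integral_nonneg fun ω => (hψ₂b ω).1
  have hc₁0 : 0 ≤ ∫ ω, χ₁ ω ∂P := integral_nonneg fun ω => (hχ₁b ω).1
  have hc₂0 : 0 ≤ ∫ ω, χ₂ ω ∂P' := integral_nonneg fun ω => (hχ₂b ω).1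
  have hd₁l : 1 - e < ∫ ω, χ₁ ω ∂Q := by linarith
  have hd₁u : ∫ ω, χ₁ ω ∂Q ≤ 1 := aux_test_int_le_one Q hχ₁m hχ₁b
  have hd₂l : 1 - e < ∫ ω, χ₂ ω ∂Q' := by linarith
  have hd₂u : ∫ ω, χ₂ ω ∂Q' ≤ 1 := aux_test_int_le_one Q' hχ₂m hχ₂b
  -- the AND test H = χ₁ ⊗ χ₂
  have hHm : Measurable (fun z : Ω × Ω' => χ₁ z.1 * χ₂ z.2) :=
    (hχ₁m.comp measurable_fst).mul (hχ₂m.comp measurable_snd)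
  have hHb : ∀ z : Ω × Ω', χ₁ z.1 * χ₂ z.2 ∈ Set.Icc (0:ℝ) 1 := fun z =>
    ⟨mul_nonneg (hχ₁b z.1).1 (hχ₂b z.2).1,
     mul_le_one₀ (hχ₁b z.1).2 (hχ₂b z.2).1 (hχ₂b z.2).2⟩
  have hHP : ∫ z : Ω × Ω', χ₁ z.1 * χ₂ z.2 ∂(P.prod P')
      = (∫ ω, χ₁ ω ∂P) * (∫ ω, χ₂ ω ∂P') := integral_prod_mul χ₁ χ₂
  have hHQ : ∫ z : Ω × Ω', χ₁ z.1 * χ₂ z.2 ∂(Q.prod Q')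
      = (∫ ω, χ₁ ω ∂Q) * (∫ ω, χ₂ ω ∂Q') := integral_prod_mul χ₁ χ₂
  have hHPle : ∫ z : Ω × Ω', χ₁ z.1 * χ₂ z.2 ∂(P.prod P') ≤ 1 - δ := by
    rw [hHP, ← hδmul]
    exact mul_le_mul hχ₁P hχ₂P hc₂0 (by linarith)
  have hHQge : 1 - 2*e ≤ ∫ z : Ω × Ω', χ₁ z.1 * χ₂ z.2 ∂(Q.prod Q') := by
    rw [hHQ]
    have hnn : 0 ≤ (1 - ∫ ω, χ₁ ω ∂Q) * (1 - ∫ ω, χ₂ ω ∂Q') :=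
      mul_nonneg (by linarith) (by linarith)
    have hexp : (∫ ω, χ₁ ω ∂Q) * (∫ ω, χ₂ ω ∂Q')
        = 1 - (1 - ∫ ω, χ₁ ω ∂Q) - (1 - ∫ ω, χ₂ ω ∂Q')
          + (1 - ∫ ω, χ₁ ω ∂Q) * (1 - ∫ ω, χ₂ ω ∂Q') := by ring
    linarith
  have hbdd : BddBelow {β : ℝ | ∃ φ : Ω × Ω' → ℝ, Measurable φ ∧
      (∀ ω, φ ω ∈ Set.Icc (0 : ℝ) 1) ∧ (∫ ω, φ ω ∂(P.prod P')) ≤ α ∧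
      β = 1 - ∫ ω, φ ω ∂(Q.prod Q')} := ⟨0, aux_set_lb _ _ _⟩
  have hf0 : 0 ≤ f0d δ α := le_max_left _ _
  by_cases hcase : 1 - δ ≤ α
  · -- use the AND test alone
    have hmem : (1 - ∫ z : Ω × Ω', χ₁ z.1 * χ₂ z.2 ∂(Q.prod Q')) ∈
        {β : ℝ | ∃ φ : Ω × Ω' → ℝ, Measurable φ ∧
          (∀ ω, φ ω ∈ Set.Icc (0 : ℝ) 1) ∧ (∫ ω, φ ω ∂(P.prod P')) ≤ α ∧
          β = 1 - ∫ ω, φ ω ∂(Q.prod Q')} :=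
      ⟨fun z => χ₁ z.1 * χ₂ z.2, hHm, hHb, by linarith, rfl⟩
    have hle := csInf_le hbdd hmem
    unfold tradeoff
    linarith
  · push_neg at hcase
    have hδlt : 0 < 1 - δ := by linarith
    set t : ℝ := α / (1 - δ) with htdef
    have ht0 : 0 ≤ t := div_nonneg hα0 (by linarith)
    have ht1 : t ≤ 1 := by rw [div_le_one hδlt]; linarith
    have htα : t * (1 - δ) = α := div_mul_cancel₀ α (ne_of_gt hδlt)
    -- the OR test G = 1 - (1-ψ₁)(1-ψ₂)
    have hkm : Measurable (fun z : Ω × Ω' => (1 - ψ₁ z.1) * (1 - ψ₂ z.2)) :=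
      ((measurable_const.sub (hψ₁m.comp measurable_fst)).mul
        (measurable_const.sub (hψ₂m.comp measurable_snd)))
    have hkb : ∀ z : Ω × Ω', (1 - ψ₁ z.1) * (1 - ψ₂ z.2) ∈ Set.Icc (0:ℝ) 1 := fun z =>
      ⟨mul_nonneg (by linarith [(hψ₁b z.1).2]) (by linarith [(hψ₂b z.2).2]),
       mul_le_one₀ (by linarith [(hψ₁b z.1).1]) (by linarith [(hψ₂b z.2).2])
         (by linarith [(hψ₂b z.2).1])⟩
    have hGm : Measurable (fun z : Ω × Ω' => 1 - (1 - ψ₁ z.1) * (1 - ψ₂ z.2)) :=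
      measurable_const.sub hkm
    have hGb : ∀ z : Ω × Ω', 1 - (1 - ψ₁ z.1) * (1 - ψ₂ z.2) ∈ Set.Icc (0:ℝ) 1 := fun z =>
      ⟨by linarith [(hkb z).2], by linarith [(hkb z).1]⟩
    have hGP : ∫ z : Ω × Ω', (1 - (1 - ψ₁ z.1) * (1 - ψ₂ z.2)) ∂(P.prod P')
        = 1 - (1 - ∫ ω, ψ₁ ω ∂P) * (1 - ∫ ω, ψ₂ ω ∂P') := by
      rw [aux_int_one_sub _ hkm hkb]
      rw [show ∫ z : Ω × Ω', (1 - ψ₁ z.1) * (1 - ψ₂ z.2) ∂(P.prod P')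
          = (∫ ω, (1 - ψ₁ ω) ∂P) * (∫ ω, (1 - ψ₂ ω) ∂P') from
        integral_prod_mul (fun ω => 1 - ψ₁ ω) (fun ω => 1 - ψ₂ ω)]
      rw [aux_int_one_sub P hψ₁m hψ₁b, aux_int_one_sub P' hψ₂m hψ₂b]
    have hGQ : ∫ z : Ω × Ω', (1 - (1 - ψ₁ z.1) * (1 - ψ₂ z.2)) ∂(Q.prod Q')
        = 1 - (1 - ∫ ω, ψ₁ ω ∂Q) * (1 - ∫ ω, ψ₂ ω ∂Q') := by
      rw [aux_int_one_sub _ hkm hkb]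
      rw [show ∫ z : Ω × Ω', (1 - ψ₁ z.1) * (1 - ψ₂ z.2) ∂(Q.prod Q')
          = (∫ ω, (1 - ψ₁ ω) ∂Q) * (∫ ω, (1 - ψ₂ ω) ∂Q') from
        integral_prod_mul (fun ω => 1 - ψ₁ ω) (fun ω => 1 - ψ₂ ω)]
      rw [aux_int_one_sub Q hψ₁m hψ₁b, aux_int_one_sub Q' hψ₂m hψ₂b]
    -- the convex combination Φ
    have hΦm : Measurable (fun z : Ω × Ω' =>
        (1 - t) * (1 - (1 - ψ₁ z.1) * (1 - ψ₂ z.2)) + t * (χ₁ z.1 * χ₂ z.2)) :=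
      (hGm.const_mul _).add (hHm.const_mul _)
    have hΦb : ∀ z : Ω × Ω',
        (1 - t) * (1 - (1 - ψ₁ z.1) * (1 - ψ₂ z.2)) + t * (χ₁ z.1 * χ₂ z.2)
          ∈ Set.Icc (0:ℝ) 1 := fun z => by
      constructor
      · exact add_nonneg (mul_nonneg (by linarith) (hGb z).1) (mul_nonneg ht0 (hHb z).1)
      · have h1 := mul_le_mul_of_nonneg_left (hGb z).2 (by linarith : (0:ℝ) ≤ 1 - t)
        have h2 := mul_le_mul_of_nonneg_left (hHb z).2 ht0
        linarith
    have hΦint : ∀ (R : Measure Ω) (R' : Measure Ω'), IsProbabilityMeasure R →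
        IsProbabilityMeasure R' →
        ∫ z : Ω × Ω', ((1 - t) * (1 - (1 - ψ₁ z.1) * (1 - ψ₂ z.2)) + t * (χ₁ z.1 * χ₂ z.2))
            ∂(R.prod R')
        = (1 - t) * (∫ z : Ω × Ω', (1 - (1 - ψ₁ z.1) * (1 - ψ₂ z.2)) ∂(R.prod R'))
          + t * (∫ z : Ω × Ω', (χ₁ z.1 * χ₂ z.2) ∂(R.prod R')) := by
      intro R R' hR hR'
      haveI := hR; haveI := hR'
      rw [integral_add ((aux_test_integrable _ hGm hGb).const_mul _)
        ((aux_test_integrable _ hHm hHb).const_mul _),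
        integral_const_mul, integral_const_mul]
    have hΦP : ∫ z : Ω × Ω', ((1 - t) * (1 - (1 - ψ₁ z.1) * (1 - ψ₂ z.2))
        + t * (χ₁ z.1 * χ₂ z.2)) ∂(P.prod P') ≤ α := by
      rw [hΦint P P' inferInstance inferInstance, hGP, ha₁, ha₂]
      have h1 : t * ((∫ ω, χ₁ ω ∂P) * (∫ ω, χ₂ ω ∂P')) ≤ t * (1 - δ) :=
        mul_le_mul_of_nonneg_left (by rw [hHP] at hHPle; exact hHPle) ht0
      rw [hHP]
      simp only [sub_zero, mul_one, one_mul, sub_self, mul_zero, zero_add]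
      linarith
    have hΦQ : δ + α - 3*e ≤ ∫ z : Ω × Ω', ((1 - t) * (1 - (1 - ψ₁ z.1) * (1 - ψ₂ z.2))
        + t * (χ₁ z.1 * χ₂ z.2)) ∂(Q.prod Q') := by
      rw [hΦint Q Q' inferInstance inferInstance, hGQ, hHQ]
      have hU : δ - 3*e ≤ 1 - (1 - ∫ ω, ψ₁ ω ∂Q) * (1 - ∫ ω, ψ₂ ω ∂Q') := by
        have hmul : (1 - ∫ ω, ψ₁ ω ∂Q) * (1 - ∫ ω, ψ₂ ω ∂Q')
            ≤ (1 - δ₁ + e) * (1 - δ₂ + e) :=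
          mul_le_mul (by linarith) (by linarith) (by linarith) (by linarith)
        have hee : e * e ≤ e := mul_le_of_le_one_right he.le (by linarith)
        have he1' : e * (1 - δ₂) ≤ e := mul_le_of_le_one_right he.le (by linarith)
        have he2' : e * (1 - δ₁) ≤ e := mul_le_of_le_one_right he.le (by linarith)
        have hexp : (1 - δ₁ + e) * (1 - δ₂ + e)
            = (1 - δ₁) * (1 - δ₂) + e * (1 - δ₂) + e * (1 - δ₁) + e * e := by ring
        linarith [hδmul]
      have hV : 1 - 2*e ≤ (∫ ω, χ₁ ω ∂Q) * (∫ ω, χ₂ ω ∂Q') := by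
        have hnn : 0 ≤ (1 - ∫ ω, χ₁ ω ∂Q) * (1 - ∫ ω, χ₂ ω ∂Q') :=
          mul_nonneg (by linarith) (by linarith)
        have hexp : (∫ ω, χ₁ ω ∂Q) * (∫ ω, χ₂ ω ∂Q')
            = 1 - (1 - ∫ ω, χ₁ ω ∂Q) - (1 - ∫ ω, χ₂ ω ∂Q')
              + (1 - ∫ ω, χ₁ ω ∂Q) * (1 - ∫ ω, χ₂ ω ∂Q') := by ring
        linarith
      have hcomb := add_le_add
        (mul_le_mul_of_nonneg_left hU (by linarith : (0:ℝ) ≤ 1 - t))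
        (mul_le_mul_of_nonneg_left hV ht0)
      have hid : (1 - t) * (δ - 3*e) + t * (1 - 2*e) = δ + t*(1-δ) - 3*e + t*e := by ring
      have hte : 0 ≤ t*e := mul_nonneg ht0 he.le
      rw [hid] at hcomb
      linarith
    have hmem : (1 - ∫ z : Ω × Ω', ((1 - t) * (1 - (1 - ψ₁ z.1) * (1 - ψ₂ z.2))
        + t * (χ₁ z.1 * χ₂ z.2)) ∂(Q.prod Q')) ∈
        {β : ℝ | ∃ φ : Ω × Ω' → ℝ, Measurable φ ∧
          (∀ ω, φ ω ∈ Set.Icc (0 : ℝ) 1) ∧ (∫ ω, φ ω ∂(P.prod P')) ≤ α ∧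
          β = 1 - ∫ ω, φ ω ∂(Q.prod Q')} :=
      ⟨_, hΦm, hΦb, hΦP, rfl⟩
    have hle := csInf_le hbdd hmem
    have hfval : 1 - δ - α ≤ f0d δ α := le_max_right _ _
    unfold tradeoff
    linarith

section aux2
variable {Ω : Type*} [MeasurableSpace Ω]

/-- From `tradeoff P Q = f0d δ`, every test satisfies `∫φdQ ≤ δ + ∫φdP`. -/
lemma aux_test_bound (P Q : Measure Ω) [IsProbabilityMeasure P] [IsProbabilityMeasure Q]
    {δ : ℝ} (h : ∀ α ∈ Set.Icc (0:ℝ) 1, tradeoff P Q α = f0d δ α)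
    {φ : Ω → ℝ} (hm : Measurable φ) (hb : ∀ ω, φ ω ∈ Set.Icc (0:ℝ) 1) :
    ∫ ω, φ ω ∂Q ≤ δ + ∫ ω, φ ω ∂P := by
  set α := ∫ ω, φ ω ∂P with hαdef
  have hα0 : 0 ≤ α := integral_nonneg fun ω => (hb ω).1
  have hα1 : α ≤ 1 := aux_test_int_le_one P hm hb
  have hmem : (1 - ∫ ω, φ ω ∂Q) ∈ {β : ℝ | ∃ φ : Ω → ℝ, Measurable φ ∧
      (∀ ω, φ ω ∈ Set.Icc (0 : ℝ) 1) ∧ (∫ ω, φ ω ∂P) ≤ α ∧ β = 1 - ∫ ω, φ ω ∂Q} :=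
    ⟨φ, hm, hb, le_rfl, rfl⟩
  have hle : tradeoff P Q α ≤ 1 - ∫ ω, φ ω ∂Q :=
    csInf_le ⟨0, aux_set_lb P Q α⟩ hmem
  rw [h α ⟨hα0, hα1⟩] at hle
  have := le_trans (le_max_right (0:ℝ) (1 - δ - α)) hle
  linarith

lemma aux_indicator_bound (P Q : Measure Ω) [IsProbabilityMeasure P] [IsProbabilityMeasure Q]
    {δ : ℝ} (h : ∀ α ∈ Set.Icc (0:ℝ) 1, tradeoff P Q α = f0d δ α) :
    ∀ A : Set Ω, MeasurableSet A → (Q A).toReal ≤ δ + (P A).toReal := by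
  intro A hA
  have hbnd : ∀ ω, A.indicator (fun _ => (1:ℝ)) ω ∈ Set.Icc (0:ℝ) 1 := fun ω => by
    by_cases hω : ω ∈ A <;> simp [Set.indicator_apply, hω]
  have hb := aux_test_bound P Q h (measurable_const.indicator hA) hbnd
  rwa [show (∫ ω, A.indicator (fun _ => (1:ℝ)) ω ∂Q) = (Q A).toReal by
        simpa [Measure.real_def] using integral_indicator_const (1:ℝ) hA,
      show (∫ ω, A.indicator (fun _ => (1:ℝ)) ω ∂P) = (P A).toReal by
        simpa [Measure.real_def] using integral_indicator_const (1:ℝ) hA] at hb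

/-- A common minorizing measure with mass ≥ 1 - δ. -/
lemma aux_exists_min_measure (P Q : Measure Ω) [IsProbabilityMeasure P] [IsProbabilityMeasure Q]
    {δ : ℝ}
    (htv : ∀ A : Set Ω, MeasurableSet A → (Q A).toReal ≤ δ + (P A).toReal) :
    ∃ m : Measure Ω, m ≤ P ∧ m ≤ Q ∧ 1 - δ ≤ (m Set.univ).toReal := by
  set ρ : Measure Ω := P + Q with hρ
  have hPρ : P ≪ ρ := Measure.absolutelyContinuous_of_le (Measure.le_add_right le_rfl)
  have hQρ : Q ≪ ρ := Measure.absolutelyContinuous_of_le (Measure.le_add_left le_rfl)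
  set p : Ω → ℝ≥0∞ := P.rnDeriv ρ with hp
  set q : Ω → ℝ≥0∞ := Q.rnDeriv ρ with hq
  have hpm : Measurable p := Measure.measurable_rnDeriv P ρ
  have hqm : Measurable q := Measure.measurable_rnDeriv Q ρ
  set m : Measure Ω := ρ.withDensity (fun x => min (p x) (q x)) with hm
  have hmP : m ≤ P := by
    have hle : ρ.withDensity (fun x => min (p x) (q x)) ≤ ρ.withDensity p :=
      withDensity_mono (Filter.Eventually.of_forall fun x => min_le_left _ _)
    rwa [Measure.withDensity_rnDeriv_eq _ _ hPρ] at hle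
  have hmQ : m ≤ Q := by
    have hle : ρ.withDensity (fun x => min (p x) (q x)) ≤ ρ.withDensity q :=
      withDensity_mono (Filter.Eventually.of_forall fun x => min_le_right _ _)
    rwa [Measure.withDensity_rnDeriv_eq _ _ hQρ] at hle
  refine ⟨m, hmP, hmQ, ?_⟩
  set A : Set Ω := {x | p x ≤ q x} with hA
  have hAmeas : MeasurableSet A := measurableSet_le hpm hqm
  have hmass : m Set.univ = P A + Q Aᶜ := by
    rw [hm, withDensity_apply _ MeasurableSet.univ, Measure.restrict_univ,
      ← lintegral_add_compl _ hAmeas]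
    congr 1
    · rw [setLIntegral_congr_fun hAmeas
        (fun x hx => min_eq_left hx)]
      exact Measure.setLIntegral_rnDeriv' hPρ hAmeas
    · rw [setLIntegral_congr_fun hAmeas.compl
        (fun x (hx : x ∈ Aᶜ) =>
          min_eq_right (le_of_lt (not_le.mp hx)))]
      exact Measure.setLIntegral_rnDeriv' hQρ hAmeas.compl
  have htoReal : (m Set.univ).toReal = (P A).toReal + (Q Aᶜ).toReal := by
    rw [hmass, ENNReal.toReal_add (measure_ne_top _ _) (measure_ne_top _ _)]
  rw [htoReal]
  have h1 := htv A hAmeas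
  have h2 : (Q Aᶜ).toReal = 1 - (Q A).toReal := by
    rw [prob_compl_eq_one_sub hAmeas, ENNReal.toReal_sub_of_le prob_le_one (by simp)]
    simp
  linarith

/-- If a common minorant has mass ≥ 1 - δ then every test φ has ∫φdQ ≤ δ + ∫φdP. -/
lemma aux_bound_of_minorant (P Q : Measure Ω) [IsProbabilityMeasure P] [IsProbabilityMeasure Q]
    {δ : ℝ} (M : Measure Ω) (hMP : M ≤ P) (hMQ : M ≤ Q)
    (hmass : 1 - δ ≤ (M Set.univ).toReal)
    {φ : Ω → ℝ} (hm : Measurable φ) (hb : ∀ ω, φ ω ∈ Set.Icc (0:ℝ) 1) :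
    ∫ ω, φ ω ∂Q ≤ δ + ∫ ω, φ ω ∂P := by
  haveI : IsFiniteMeasure M := isFiniteMeasure_of_le Q hMQ
  set ν : Measure Ω := Q - M with hν
  haveI : IsFiniteMeasure ν := isFiniteMeasure_of_le Q (Measure.sub_le)
  have hsplit : ν + M = Q := Measure.sub_add_cancel_of_le hMQ
  have hint : ∫ ω, φ ω ∂Q = ∫ ω, φ ω ∂ν + ∫ ω, φ ω ∂M := by
    rw [← hsplit,
      integral_add_measure (aux_test_integrable ν hm hb) (aux_test_integrable M hm hb)]
  have h1 : ∫ ω, φ ω ∂M ≤ ∫ ω, φ ω ∂P :=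
    integral_mono_measure hMP (Filter.Eventually.of_forall fun ω => (hb ω).1)
      (aux_test_integrable P hm hb)
  have h2 : ∫ ω, φ ω ∂ν ≤ (ν Set.univ).toReal := by
    have := integral_mono (μ := ν) (aux_test_integrable ν hm hb) (integrable_const (1:ℝ))
      (fun ω => (hb ω).2)
    simpa [Measure.real_def] using this
  have h3 : (ν Set.univ).toReal ≤ δ := by
    have happ : ν Set.univ = Q Set.univ - M Set.univ :=
      Measure.sub_apply MeasurableSet.univ hMQ
    rw [happ, ENNReal.toReal_sub_of_le (hMQ _) (measure_ne_top _ _)]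
    have huniv : (Q Set.univ).toReal = 1 := by simp
    linarith
  linarith

lemma aux_prod_mono {Ω Ω' : Type*} [MeasurableSpace Ω] [MeasurableSpace Ω']
    {μ ν : Measure Ω} {μ' ν' : Measure Ω'} [IsFiniteMeasure ν] [IsFiniteMeasure ν']
    (h : μ ≤ ν) (h' : μ' ≤ ν') : μ.prod μ' ≤ ν.prod ν' := by
  haveI : IsFiniteMeasure μ := isFiniteMeasure_of_le ν h
  haveI : IsFiniteMeasure μ' := isFiniteMeasure_of_le ν' h'
  rw [Measure.le_iff]
  intro s hs
  rw [Measure.prod_apply hs, Measure.prod_apply hs]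
  calc ∫⁻ x, μ' (Prod.mk x ⁻¹' s) ∂μ ≤ ∫⁻ x, ν' (Prod.mk x ⁻¹' s) ∂μ :=
        lintegral_mono fun x => h' _
    _ ≤ ∫⁻ x, ν' (Prod.mk x ⁻¹' s) ∂ν := lintegral_mono' h le_rfl

end aux2

/-- Composition of `(0,δ)`-DP tradeoff curves: if `(P,Q)` and `(P',Q')` realize
`f_{0,δ₁}` and `f_{0,δ₂}`, then the product testing problem realizes
`f_{0, δ₁+δ₂-δ₁δ₂}` (i.e. `f_{0,δ₁} ⊗ f_{0,δ₂} = f_{0,δ₁+δ₂-δ₁δ₂}`), and `δ₂ < δ₁`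
implies `f_{0,δ₁} ≤ f_{0,δ₂}` pointwise on `[0,1]`. -/
theorem stmt18 (δ₁ δ₂ : ℝ) (hδ₁ : δ₁ ∈ Set.Icc (0 : ℝ) 1) (hδ₂ : δ₂ ∈ Set.Icc (0 : ℝ) 1)
    {Ω Ω' : Type*} [MeasurableSpace Ω] [MeasurableSpace Ω']
    (P Q : Measure Ω) (P' Q' : Measure Ω')
    [IsProbabilityMeasure P] [IsProbabilityMeasure Q]
    [IsProbabilityMeasure P'] [IsProbabilityMeasure Q']
    (hPQ : ∀ α ∈ Set.Icc (0 : ℝ) 1, tradeoff P Q α = f0d δ₁ α)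
    (hPQ' : ∀ α ∈ Set.Icc (0 : ℝ) 1, tradeoff P' Q' α = f0d δ₂ α) :
    (∀ α ∈ Set.Icc (0 : ℝ) 1,
        tradeoff (P.prod P') (Q.prod Q') α = f0d (δ₁ + δ₂ - δ₁ * δ₂) α) ∧
      (δ₂ < δ₁ → ∀ α ∈ Set.Icc (0 : ℝ) 1, f0d δ₁ α ≤ f0d δ₂ α) := by
  obtain ⟨h10, h11⟩ := hδ₁
  obtain ⟨h20, h21⟩ := hδ₂
  constructor
  · intro α hα
    obtain ⟨hα0, hα1⟩ := hα
    set δ : ℝ := δ₁ + δ₂ - δ₁ * δ₂ with hδdef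
    -- lower bound via a common minorant of the product measures
    obtain ⟨m, hmP, hmQ, hm1⟩ :=
      aux_exists_min_measure P Q (aux_indicator_bound P Q hPQ)
    obtain ⟨m', hmP', hmQ', hm1'⟩ :=
      aux_exists_min_measure P' Q' (aux_indicator_bound P' Q' hPQ')
    haveI : IsFiniteMeasure m := isFiniteMeasure_of_le P hmP
    haveI : IsFiniteMeasure m' := isFiniteMeasure_of_le P' hmP'
    have hMP : m.prod m' ≤ P.prod P' := aux_prod_mono hmP hmP'
    have hMQ : m.prod m' ≤ Q.prod Q' := aux_prod_mono hmQ hmQ'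
    have hmass : 1 - δ ≤ ((m.prod m') Set.univ).toReal := by
      have hprod : (m.prod m') Set.univ = m Set.univ * m' Set.univ := by
        rw [← Set.univ_prod_univ, Measure.prod_prod]
      rw [hprod, ENNReal.toReal_mul]
      have h1 := ENNReal.toReal_nonneg (a := m Set.univ)
      have key : (1 - δ₁) * (1 - δ₂) ≤ (m Set.univ).toReal * (m' Set.univ).toReal :=
        mul_le_mul hm1 hm1' (by linarith) h1
      nlinarith [key]
    have hge : f0d δ α ≤ tradeoff (P.prod P') (Q.prod Q') α := by
      apply le_csInf ⟨1, aux_set_nonempty _ _ hα0⟩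
      rintro β ⟨φ, hm, hb, hP, rfl⟩
      refine max_le ?_ ?_
      · have := aux_test_int_le_one (Q.prod Q') hm hb; linarith
      · have := aux_bound_of_minorant (P.prod P') (Q.prod Q') (m.prod m') hMP hMQ hmass hm hb
        linarith
    have hle : tradeoff (P.prod P') (Q.prod Q') α ≤ f0d δ α := by
      by_contra hcon
      push_neg at hcon
      have hkey := aux_upper δ₁ δ₂ h10 h11 h20 h21 P Q P' Q' hPQ hPQ' hα0 hα1
        (ε := (tradeoff (P.prod P') (Q.prod Q') α - f0d δ α) / 2) (by linarith)
      rw [← hδdef] at hkey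
      linarith
    exact le_antisymm hle hge
  · intro _ α _
    exact max_le_max le_rfl (by linarith)
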